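/- Let A : X → Y and B, C : Y → X satisfy A(BA)² = ABACA = ACABA = (AC)²A. Then for all n ∈ ℕ, k_n(AC−I) = k_n(BA−I), where k_n(T) = dim (R(T)+N(T^{n+1}))/(R(T)+N(T^n)). -/

import Mathlib

open Polynomial ContinuousLinearMap

universe u

variable {X Y : Type u} [NormedAddCommGroup X] [NormedSpace ℂ X] [CompleteSpace X]
  [NormedAddCommGroup Y] [NormedSpace ℂ Y] [CompleteSpace Y]

set_option linter.unusedSectionVars false

lemma keyRank (T : X →L[ℂ] X) (T' : Y →L[ℂ] Y) (U : X →L[ℂ] Y) (D : Y →L[ℂ] X)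
    (S : X →L[ℂ] X) (S' : Y →L[ℂ] Y)
    (hUT : U ∘L T = T' ∘L U) (hDT : D ∘L T' = T ∘L D)
    (hDU : D ∘L U = 1 + T ∘L S) (hUD : U ∘L D = 1 + T' ∘L S')
    (n : ℕ) :
    Module.rank ℂ ((LinearMap.range (T' : Y →ₗ[ℂ] Y) ⊔ LinearMap.ker ((T' ^ (n + 1) : Y →L[ℂ] Y) : Y →ₗ[ℂ] Y) : Submodule ℂ Y) ⧸
          ((LinearMap.range (T' : Y →ₗ[ℂ] Y) ⊔ LinearMap.ker ((T' ^ n : Y →L[ℂ] Y) : Y →ₗ[ℂ] Y) : Submodule ℂ Y)).comap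
            ((LinearMap.range (T' : Y →ₗ[ℂ] Y) ⊔ LinearMap.ker ((T' ^ (n + 1) : Y →L[ℂ] Y) : Y →ₗ[ℂ] Y) : Submodule ℂ Y)).subtype) =
      Module.rank ℂ ((LinearMap.range (T : X →ₗ[ℂ] X) ⊔ LinearMap.ker ((T ^ (n + 1) : X →L[ℂ] X) : X →ₗ[ℂ] X) : Submodule ℂ X) ⧸
          ((LinearMap.range (T : X →ₗ[ℂ] X) ⊔ LinearMap.ker ((T ^ n : X →L[ℂ] X) : X →ₗ[ℂ] X) : Submodule ℂ X)).comap
            ((LinearMap.range (T : X →ₗ[ℂ] X) ⊔ LinearMap.ker ((T ^ (n + 1) : X →L[ℂ] X) : X →ₗ[ℂ] X) : Submodule ℂ X)).subtype) := by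
  have hUpow : ∀ m : ℕ, U ∘L (T ^ m) = (T' ^ m) ∘L U := by
    intro m
    induction m with
    | zero => simp [ContinuousLinearMap.one_def]
    | succ m ih =>
      rw [pow_succ, pow_succ, ContinuousLinearMap.mul_def, ContinuousLinearMap.mul_def,
        ← ContinuousLinearMap.comp_assoc, ih, ContinuousLinearMap.comp_assoc, hUT,
        ← ContinuousLinearMap.comp_assoc]
  have hDpow : ∀ m : ℕ, D ∘L (T' ^ m) = (T ^ m) ∘L D := by
    intro m
    induction m with
    | zero => simp [ContinuousLinearMap.one_def]
    | succ m ih =>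
      rw [pow_succ, pow_succ, ContinuousLinearMap.mul_def, ContinuousLinearMap.mul_def,
        ← ContinuousLinearMap.comp_assoc, ih, ContinuousLinearMap.comp_assoc, hDT,
        ← ContinuousLinearMap.comp_assoc]
  have hmemU : ∀ (m : ℕ) (x : X), x ∈ (LinearMap.range (T : X →ₗ[ℂ] X) ⊔ LinearMap.ker ((T ^ m : X →L[ℂ] X) : X →ₗ[ℂ] X)) →
      U x ∈ (LinearMap.range (T' : Y →ₗ[ℂ] Y) ⊔ LinearMap.ker ((T' ^ m : Y →L[ℂ] Y) : Y →ₗ[ℂ] Y)) := by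
    intro m x hx
    rw [Submodule.mem_sup] at hx ⊢
    obtain ⟨r, hr, k, hk, rfl⟩ := hx
    obtain ⟨a, rfl⟩ := LinearMap.mem_range.1 hr
    refine ⟨U (T a), LinearMap.mem_range.2 ⟨U a, ?_⟩, U k, LinearMap.mem_ker.2 ?_, by simp⟩
    · rw [ContinuousLinearMap.coe_coe, ← ContinuousLinearMap.comp_apply, ← hUT, ContinuousLinearMap.comp_apply]
    · rw [ContinuousLinearMap.coe_coe, ← ContinuousLinearMap.comp_apply, ← hUpow, ContinuousLinearMap.comp_apply,
        ← ContinuousLinearMap.coe_coe (T ^ m),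
        LinearMap.mem_ker.1 hk, map_zero]
  have hmemD : ∀ (m : ℕ) (y : Y), y ∈ (LinearMap.range (T' : Y →ₗ[ℂ] Y) ⊔ LinearMap.ker ((T' ^ m : Y →L[ℂ] Y) : Y →ₗ[ℂ] Y)) →
      D y ∈ (LinearMap.range (T : X →ₗ[ℂ] X) ⊔ LinearMap.ker ((T ^ m : X →L[ℂ] X) : X →ₗ[ℂ] X)) := by
    intro m y hy
    rw [Submodule.mem_sup] at hy ⊢
    obtain ⟨r, hr, k, hk, rfl⟩ := hy
    obtain ⟨a, rfl⟩ := LinearMap.mem_range.1 hr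
    refine ⟨D (T' a), LinearMap.mem_range.2 ⟨D a, ?_⟩, D k, LinearMap.mem_ker.2 ?_, by simp⟩
    · rw [ContinuousLinearMap.coe_coe, ← ContinuousLinearMap.comp_apply, ← hDT, ContinuousLinearMap.comp_apply]
    · rw [ContinuousLinearMap.coe_coe, ← ContinuousLinearMap.comp_apply, ← hDpow, ContinuousLinearMap.comp_apply,
        ← ContinuousLinearMap.coe_coe (T' ^ m),
        LinearMap.mem_ker.1 hk, map_zero]
  set VX1 : Submodule ℂ X := LinearMap.range (T : X →ₗ[ℂ] X) ⊔ LinearMap.ker ((T ^ (n + 1) : X →L[ℂ] X) : X →ₗ[ℂ] X) with hVX1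
  set VXn : Submodule ℂ X := LinearMap.range (T : X →ₗ[ℂ] X) ⊔ LinearMap.ker ((T ^ n : X →L[ℂ] X) : X →ₗ[ℂ] X) with hVXn
  set VY1 : Submodule ℂ Y := LinearMap.range (T' : Y →ₗ[ℂ] Y) ⊔ LinearMap.ker ((T' ^ (n + 1) : Y →L[ℂ] Y) : Y →ₗ[ℂ] Y) with hVY1
  set VYn : Submodule ℂ Y := LinearMap.range (T' : Y →ₗ[ℂ] Y) ⊔ LinearMap.ker ((T' ^ n : Y →L[ℂ] Y) : Y →ₗ[ℂ] Y) with hVYn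
  have hUr : ∀ x ∈ VX1, (U : X →ₗ[ℂ] Y) x ∈ VY1 := fun x hx => hmemU (n + 1) x hx
  have hDr : ∀ y ∈ VY1, (D : Y →ₗ[ℂ] X) y ∈ VX1 := fun y hy => hmemD (n + 1) y hy
  set Ur : VX1 →ₗ[ℂ] VY1 := (U : X →ₗ[ℂ] Y).restrict hUr with hUrdef
  set Dr : VY1 →ₗ[ℂ] VX1 := (D : Y →ₗ[ℂ] X).restrict hDr with hDrdef
  have hUq : VXn.comap VX1.subtype ≤ (VYn.comap VY1.subtype).comap Ur := by
    intro x hx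
    simp only [Submodule.mem_comap, Submodule.subtype_apply] at hx ⊢
    have : ((Ur x : VY1) : Y) = U (x : X) := rfl
    rw [this]
    exact hmemU n _ hx
  have hDq : VYn.comap VY1.subtype ≤ (VXn.comap VX1.subtype).comap Dr := by
    intro y hy
    simp only [Submodule.mem_comap, Submodule.subtype_apply] at hy ⊢
    have : ((Dr y : VX1) : X) = D (y : Y) := rfl
    rw [this]
    exact hmemD n _ hy
  set fU := Submodule.mapQ (VXn.comap VX1.subtype) (VYn.comap VY1.subtype) Ur hUq with hfU
  set gD := Submodule.mapQ (VYn.comap VY1.subtype) (VXn.comap VX1.subtype) Dr hDq with hgD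
  have hgf : gD ∘ₗ fU = LinearMap.id := by
    refine LinearMap.ext fun z => ?_
    obtain ⟨x, rfl⟩ := Submodule.Quotient.mk_surjective _ z
    simp only [LinearMap.comp_apply, hfU, hgD, Submodule.mapQ_apply, LinearMap.id_apply]
    rw [Submodule.Quotient.eq]
    simp only [Submodule.mem_comap, Submodule.subtype_apply, AddSubgroupClass.coe_sub]
    have h1 : ((Dr (Ur x) : VX1) : X) = D (U (x : X)) := rfl
    rw [h1]
    have h2 := DFunLike.congr_fun hDU (x : X)
    simp only [ContinuousLinearMap.comp_apply, ContinuousLinearMap.add_apply,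
      ContinuousLinearMap.one_apply] at h2
    rw [h2, add_sub_cancel_left]
    exact Submodule.mem_sup_left (LinearMap.mem_range.2 ⟨S (x : X), rfl⟩)
  have hfg : fU ∘ₗ gD = LinearMap.id := by
    refine LinearMap.ext fun z => ?_
    obtain ⟨y, rfl⟩ := Submodule.Quotient.mk_surjective _ z
    simp only [LinearMap.comp_apply, hfU, hgD, Submodule.mapQ_apply, LinearMap.id_apply]
    rw [Submodule.Quotient.eq]
    simp only [Submodule.mem_comap, Submodule.subtype_apply, AddSubgroupClass.coe_sub]
    have h1 : ((Ur (Dr y) : VY1) : Y) = U (D (y : Y)) := rfl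
    rw [h1]
    have h2 := DFunLike.congr_fun hUD (y : Y)
    simp only [ContinuousLinearMap.comp_apply, ContinuousLinearMap.add_apply,
      ContinuousLinearMap.one_apply] at h2
    rw [h2, add_sub_cancel_left]
    exact Submodule.mem_sup_left (LinearMap.mem_range.2 ⟨S' (y : Y), rfl⟩)
  exact (LinearEquiv.ofLinear gD fU hgf hfg).rank_eq

theorem stmt11 (A : X →L[ℂ] Y) (B C : Y →L[ℂ] X)
    (h1 : A ∘L B ∘L A ∘L B ∘L A = A ∘L B ∘L A ∘L C ∘L A)
    (h2 : A ∘L B ∘L A ∘L C ∘L A = A ∘L C ∘L A ∘L B ∘L A)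
    (h3 : A ∘L C ∘L A ∘L B ∘L A = A ∘L C ∘L A ∘L C ∘L A) (n : ℕ) :
    Module.rank ℂ ((LinearMap.range ((A ∘L C - 1 : Y →L[ℂ] Y) : Y →ₗ[ℂ] Y) ⊔ LinearMap.ker (((A ∘L C - 1) ^ (n + 1) : Y →L[ℂ] Y) : Y →ₗ[ℂ] Y) :
            Submodule ℂ Y) ⧸
          ((LinearMap.range ((A ∘L C - 1 : Y →L[ℂ] Y) : Y →ₗ[ℂ] Y) ⊔ LinearMap.ker (((A ∘L C - 1) ^ n : Y →L[ℂ] Y) : Y →ₗ[ℂ] Y) :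
            Submodule ℂ Y)).comap
            ((LinearMap.range ((A ∘L C - 1 : Y →L[ℂ] Y) : Y →ₗ[ℂ] Y) ⊔ LinearMap.ker (((A ∘L C - 1) ^ (n + 1) : Y →L[ℂ] Y) : Y →ₗ[ℂ] Y) :
              Submodule ℂ Y)).subtype) =
      Module.rank ℂ ((LinearMap.range ((B ∘L A - 1 : X →L[ℂ] X) : X →ₗ[ℂ] X) ⊔ LinearMap.ker (((B ∘L A - 1) ^ (n + 1) : X →L[ℂ] X) : X →ₗ[ℂ] X) :
            Submodule ℂ X) ⧸
          ((LinearMap.range ((B ∘L A - 1 : X →L[ℂ] X) : X →ₗ[ℂ] X) ⊔ LinearMap.ker (((B ∘L A - 1) ^ n : X →L[ℂ] X) : X →ₗ[ℂ] X) :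
            Submodule ℂ X)).comap
            ((LinearMap.range ((B ∘L A - 1 : X →L[ℂ] X) : X →ₗ[ℂ] X) ⊔ LinearMap.ker (((B ∘L A - 1) ^ (n + 1) : X →L[ℂ] X) : X →ₗ[ℂ] X) :
              Submodule ℂ X)).subtype) := by
  have hx1 : ∀ x : X, A (B (A (B (A x)))) = A (B (A (C (A x)))) := fun x => by
    simpa using DFunLike.congr_fun h1 x
  have hx2 : ∀ x : X, A (B (A (C (A x)))) = A (C (A (B (A x)))) := fun x => by
    simpa using DFunLike.congr_fun h2 x
  have hx3 : ∀ x : X, A (C (A (B (A x)))) = A (C (A (C (A x)))) := fun x => by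
    simpa using DFunLike.congr_fun h3 x
  have h123 : ∀ x : X, A (B (A (B (A x)))) = A (C (A (C (A x)))) := fun x =>
    (hx1 x).trans ((hx2 x).trans (hx3 x))
  set Q : X →L[ℂ] X := B ∘L A with hQdef
  set P : Y →L[ℂ] Y := A ∘L C with hPdef
  set U : X →L[ℂ] Y := A ∘L B ∘L A ∘L B ∘L A with hUdef
  set D : Y →L[ℂ] X := B ∘L A ∘L B ∘L A ∘L C with hDdef
  have hUQ : U ∘L Q = P ∘L U := by
    ext x
    simp only [hUdef, hQdef, hPdef, ContinuousLinearMap.comp_apply]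
    rw [hx1 (B (A x)), hx2 (B (A x))]
  have hDP : D ∘L P = Q ∘L D := by
    ext y
    simp only [hUdef, hQdef, hPdef, hDdef, ContinuousLinearMap.comp_apply]
    rw [← hx1 (C y)]
  have hDU5 : D ∘L U = Q ∘L (Q ∘L (Q ∘L (Q ∘L Q))) := by
    ext x
    simp only [hUdef, hQdef, hDdef, ContinuousLinearMap.comp_apply]
    rw [← hx1 (B (A (B (A x))))]
  have hUD5 : U ∘L D = P ∘L (P ∘L (P ∘L (P ∘L P))) := by
    ext y
    simp only [hUdef, hPdef, hDdef, ContinuousLinearMap.comp_apply]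
    rw [h123 (B (A (B (A (C y))))), h123 (C y)]
  refine keyRank (Q - 1) (P - 1) U D (Q ^ 4 + Q ^ 3 + Q ^ 2 + Q + 1)
    (P ^ 4 + P ^ 3 + P ^ 2 + P + 1) ?_ ?_ ?_ ?_ n
  · simp only [ContinuousLinearMap.comp_sub, ContinuousLinearMap.sub_comp,
      ContinuousLinearMap.comp_id, ContinuousLinearMap.id_comp, ContinuousLinearMap.one_def,
      hUQ]
  · simp only [ContinuousLinearMap.comp_sub, ContinuousLinearMap.sub_comp,
      ContinuousLinearMap.comp_id, ContinuousLinearMap.id_comp, ContinuousLinearMap.one_def,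
      hDP]
  · rw [hDU5]
    show Q * (Q * (Q * (Q * Q))) = 1 + (Q - 1) * (Q ^ 4 + Q ^ 3 + Q ^ 2 + Q + 1)
    noncomm_ring
  · rw [hUD5]
    show P * (P * (P * (P * P))) = 1 + (P - 1) * (P ^ 4 + P ^ 3 + P ^ 2 + P + 1)
    noncomm_ring
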